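/- For any two sequences of positive reals (μ_i) and (ν_i), if B := sup_{k≥1} (∑_{j≥k} μ_j)(∑_{i=1}^k 1/ν_i) is finite, then for every real sequence (f_i) one has ∑_{i=1}^∞ μ_i (∑_{j=1}^i f_j)^2 ≤ 4B ∑_{i=1}^∞ ν_i f_i^2. -/

import Mathlib

open Finset Real


lemma aux_div (a b : ℝ) (hb : 0 ≤ b) (hab : b ≤ a) (ha : 0 < a) :
    (a - b) / Real.sqrt a ≤ 2 * (Real.sqrt a - Real.sqrt b) := by
  rw [div_le_iff₀ (Real.sqrt_pos.2 ha)]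
  nlinarith [Real.sq_sqrt ha.le, Real.sq_sqrt hb, Real.sqrt_nonneg a, Real.sqrt_nonneg b,
    Real.sqrt_le_sqrt hab]

noncomputable def gg (ν : ℕ → ℝ) (k : ℕ) : ℝ := ∑ i ∈ Finset.range (k + 1), 1 / ν i
noncomputable def MM (μ : ℕ → ℝ) (k : ℕ) : ℝ := ∑' j : ℕ, μ (k + j)

variable (μ ν : ℕ → ℝ)

lemma gg_pos (hν : ∀ i, 0 < ν i) (k : ℕ) : 0 < gg ν k := by
  apply Finset.sum_pos (fun i _ => one_div_pos.2 (hν i))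
  exact ⟨0, Finset.mem_range.2 (Nat.succ_pos _)⟩

lemma gg_mono (hν : ∀ i, 0 < ν i) {j k : ℕ} (h : j ≤ k) : gg ν j ≤ gg ν k := by
  apply Finset.sum_le_sum_of_subset_of_nonneg
  · exact Finset.range_subset_range.2 (by omega)
  · intro i _ _; exact (one_div_pos.2 (hν i)).le

lemma MM_summable (k : ℕ) (hμs : Summable μ) : Summable (fun j => μ (k + j)) :=
  (summable_nat_add_iff k).2 hμs |>.congr (fun j => by rw [add_comm])

lemma MM_pos (hμ : ∀ i, 0 < μ i) (hμs : Summable μ) (k : ℕ) : 0 < MM μ k :=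
  Summable.tsum_pos (MM_summable μ k hμs) (fun i => (hμ _).le) 0 (hμ _)

lemma MM_succ (hμs : Summable μ) (k : ℕ) : MM μ k = μ k + MM μ (k + 1) := by
  rw [MM, Summable.tsum_eq_zero_add (MM_summable μ k hμs)]
  simp only [add_zero, MM]
  congr 1
  exact tsum_congr fun j => by ring_nf

-- Lemma A
lemma lemA (hν : ∀ i, 0 < ν i) (i : ℕ) :
    ∑ j ∈ Finset.range (i + 1), 1 / (ν j * Real.sqrt (gg ν j)) ≤ 2 * Real.sqrt (gg ν i) := by
  induction i with
  | zero =>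
    have h0 : gg ν 0 = 1 / ν 0 := by simp [gg]
    have hg0 : 0 < gg ν 0 := gg_pos ν hν 0
    have hs : Real.sqrt (gg ν 0) ^ 2 = gg ν 0 := Real.sq_sqrt hg0.le
    have hspos : 0 < Real.sqrt (gg ν 0) := Real.sqrt_pos.2 hg0
    have hng : ν 0 * gg ν 0 = 1 := by rw [h0]; field_simp; exact div_self (hν 0).ne'
    rw [Finset.sum_range_one, div_le_iff₀ (mul_pos (hν 0) hspos)]
    nlinarith [hs, hspos, hν 0]
  | succ n ih =>
    rw [Finset.sum_range_succ]
    have hgn : 0 < gg ν n := gg_pos ν hν n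
    have hgn1 : 0 < gg ν (n + 1) := gg_pos ν hν (n + 1)
    have hstep : gg ν (n + 1) - gg ν n = 1 / ν (n + 1) := by
      simp [gg, Finset.sum_range_succ]
    have h1 : 1 / (ν (n + 1) * Real.sqrt (gg ν (n + 1)))
        = (gg ν (n + 1) - gg ν n) / Real.sqrt (gg ν (n + 1)) := by
      rw [hstep]; field_simp
    have h2 := aux_div (gg ν (n + 1)) (gg ν n) hgn.le (gg_mono ν hν (Nat.le_succ n)) hgn1
    rw [h1]
    linarith
-- Lemma B
lemma lemB (hμ : ∀ i, 0 < μ i) (hν : ∀ i, 0 < ν i) (hμs : Summable μ) (B : ℝ)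
    (hMg : ∀ k, MM μ k * gg ν k ≤ B) (n j : ℕ) :
    ∑ i ∈ Finset.Ico j (j + n), μ i * Real.sqrt (gg ν i)
      ≤ 2 * Real.sqrt B * (Real.sqrt (MM μ j) - Real.sqrt (MM μ (j + n))) := by
  have hB0 : 0 ≤ B := le_trans (mul_pos (MM_pos μ hμ hμs 0) (gg_pos ν hν 0)).le (hMg 0)
  induction n generalizing j with
  | zero => simp
  | succ n ih =>
    have hlt : j < j + (n + 1) := by omega
    rw [Finset.sum_eq_sum_Ico_succ_bot hlt]
    have key1 : μ j * Real.sqrt (gg ν j)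
        ≤ 2 * Real.sqrt B * (Real.sqrt (MM μ j) - Real.sqrt (MM μ (j + 1))) := by
      have hMj : 0 < MM μ j := MM_pos μ hμ hμs j
      have hgj : 0 < gg ν j := gg_pos ν hν j
      have hsg : Real.sqrt (gg ν j) ≤ Real.sqrt B / Real.sqrt (MM μ j) := by
        rw [le_div_iff₀ (Real.sqrt_pos.2 hMj), ← Real.sqrt_mul hgj.le]
        apply Real.sqrt_le_sqrt
        rw [mul_comm]; exact hMg j
      have hμsucc : MM μ j - MM μ (j + 1) = μ j := by rw [MM_succ μ hμs j]; ring
      calc μ j * Real.sqrt (gg ν j) ≤ μ j * (Real.sqrt B / Real.sqrt (MM μ j)) := by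
            exact mul_le_mul_of_nonneg_left hsg (hμ j).le
        _ = Real.sqrt B * ((MM μ j - MM μ (j + 1)) / Real.sqrt (MM μ j)) := by
            rw [hμsucc]; ring
        _ ≤ Real.sqrt B * (2 * (Real.sqrt (MM μ j) - Real.sqrt (MM μ (j + 1)))) := by
            apply mul_le_mul_of_nonneg_left _ (Real.sqrt_nonneg B)
            exact aux_div _ _ (MM_pos μ hμ hμs (j + 1)).le
              (by rw [MM_succ μ hμs j]; nlinarith [hμ j]) hMj
        _ = 2 * Real.sqrt B * (Real.sqrt (MM μ j) - Real.sqrt (MM μ (j + 1))) := by ring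
    have key2 := ih (j + 1)
    have : j + 1 + n = j + (n + 1) := by omega
    rw [this] at key2
    linarith

lemma keyfin (hμ : ∀ i, 0 < μ i) (hν : ∀ i, 0 < ν i) (hμs : Summable μ) (B : ℝ)
    (hMg : ∀ k, MM μ k * gg ν k ≤ B) (f : ℕ → ℝ) (N : ℕ) :
    ∑ i ∈ Finset.range N, μ i * (∑ j ∈ Finset.range (i + 1), f j) ^ 2
      ≤ 4 * B * ∑ i ∈ Finset.range N, ν i * f i ^ 2 := by
  have hB0 : 0 ≤ B := le_trans (mul_pos (MM_pos μ hμ hμs 0) (gg_pos ν hν 0)).le (hMg 0)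
  set a : ℕ → ℝ := fun j => ν j * f j ^ 2 * Real.sqrt (gg ν j) with ha
  have ha_nonneg : ∀ j, 0 ≤ a j := fun j => by
    have h1 := (hν j).le; have h2 := Real.sqrt_nonneg (gg ν j); positivity
  have step1 : ∀ i, (∑ j ∈ Finset.range (i + 1), f j) ^ 2
      ≤ (∑ j ∈ Finset.range (i + 1), a j) * (2 * Real.sqrt (gg ν i)) := by
    intro i
    set w : ℕ → ℝ := fun j => Real.sqrt (ν j * Real.sqrt (gg ν j)) with hw
    have hwpos : ∀ j, 0 < w j := fun j =>
      Real.sqrt_pos.2 (mul_pos (hν j) (Real.sqrt_pos.2 (gg_pos ν hν j)))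
    have hwsq : ∀ j, w j ^ 2 = ν j * Real.sqrt (gg ν j) := fun j =>
      Real.sq_sqrt (mul_pos (hν j) (Real.sqrt_pos.2 (gg_pos ν hν j))).le
    have hcs := Finset.sum_mul_sq_le_sq_mul_sq (Finset.range (i + 1))
      (fun j => f j * w j) (fun j => 1 / w j)
    have hf : ∀ j ∈ Finset.range (i+1), (f j * w j) * (1 / w j) = f j := fun j _ => by
      rw [mul_one_div]; exact mul_div_cancel_right₀ (f j) (hwpos j).ne'
    rw [Finset.sum_congr rfl hf] at hcs
    have e1 : ∀ j ∈ Finset.range (i+1), (f j * w j) ^ 2 = a j := fun j _ => by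
      rw [mul_pow, hwsq j, ha]; ring
    have e2 : ∀ j ∈ Finset.range (i+1), (1 / w j) ^ 2 = 1 / (ν j * Real.sqrt (gg ν j)) :=
      fun j _ => by rw [div_pow, one_pow, hwsq j]
    rw [Finset.sum_congr rfl e1, Finset.sum_congr rfl e2] at hcs
    refine hcs.trans ?_
    exact mul_le_mul_of_nonneg_left (lemA ν hν i)
      (Finset.sum_nonneg fun j _ => ha_nonneg j)
  have step2 : ∑ i ∈ Finset.range N, μ i * (∑ j ∈ Finset.range (i + 1), f j) ^ 2
      ≤ ∑ j ∈ Finset.range N, a j * ∑ i ∈ Finset.Ico j N, 2 * μ i * Real.sqrt (gg ν i) := by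
    have h1 : ∀ i ∈ Finset.range N,
        μ i * (∑ j ∈ Finset.range (i + 1), f j) ^ 2
          ≤ ∑ j ∈ Finset.range (i + 1), a j * (2 * μ i * Real.sqrt (gg ν i)) := by
      intro i _
      rw [← Finset.sum_mul]
      calc μ i * (∑ j ∈ Finset.range (i + 1), f j) ^ 2
          ≤ μ i * ((∑ j ∈ Finset.range (i + 1), a j) * (2 * Real.sqrt (gg ν i))) :=
            mul_le_mul_of_nonneg_left (step1 i) (hμ i).le
        _ = (∑ j ∈ Finset.range (i + 1), a j) * (2 * μ i * Real.sqrt (gg ν i)) := by ring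
    refine (Finset.sum_le_sum h1).trans ?_
    have hswap : ∑ i ∈ Finset.range N, ∑ j ∈ Finset.range (i+1),
          a j * (2 * μ i * Real.sqrt (gg ν i))
        = ∑ j ∈ Finset.range N, ∑ i ∈ Finset.Ico j N,
          a j * (2 * μ i * Real.sqrt (gg ν i)) := by
      refine Finset.sum_comm' ?_
      intro x y
      simp only [Finset.mem_range, Finset.mem_Ico]
      omega
    rw [hswap]
    exact le_of_eq (Finset.sum_congr rfl fun j _ => by rw [Finset.mul_sum])
  refine step2.trans ?_
  have step3 : ∀ j ∈ Finset.range N,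
      a j * ∑ i ∈ Finset.Ico j N, 2 * μ i * Real.sqrt (gg ν i)
        ≤ 4 * B * (ν j * f j ^ 2) := by
    intro j hj
    have hjN : j ≤ N := (Finset.mem_range.1 hj).le
    have hgj := gg_pos ν hν j
    have hsgj := Real.sqrt_pos.2 hgj
    have hIco : ∑ i ∈ Finset.Ico j N, μ i * Real.sqrt (gg ν i)
        ≤ 2 * Real.sqrt B * Real.sqrt (MM μ j) := by
      have h := lemB μ ν hμ hν hμs B hMg (N - j) j
      rw [Nat.add_sub_cancel' hjN] at h
      refine h.trans ?_
      nlinarith [Real.sqrt_nonneg B, Real.sqrt_nonneg (MM μ N)]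
    have hMle : Real.sqrt (MM μ j) ≤ Real.sqrt B / Real.sqrt (gg ν j) := by
      rw [le_div_iff₀ hsgj, ← Real.sqrt_mul (MM_pos μ hμ hμs j).le]
      exact Real.sqrt_le_sqrt (hMg j)
    have h2 : ∑ i ∈ Finset.Ico j N, 2 * μ i * Real.sqrt (gg ν i)
        = 2 * ∑ i ∈ Finset.Ico j N, μ i * Real.sqrt (gg ν i) := by
      rw [Finset.mul_sum]; exact Finset.sum_congr rfl fun i _ => by ring
    have h3 : ∑ i ∈ Finset.Ico j N, 2 * μ i * Real.sqrt (gg ν i)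
        ≤ 4 * B / Real.sqrt (gg ν j) := by
      rw [h2]
      have h4 : 2 * Real.sqrt B * Real.sqrt (MM μ j)
          ≤ 2 * Real.sqrt B * (Real.sqrt B / Real.sqrt (gg ν j)) :=
        mul_le_mul_of_nonneg_left hMle (by positivity)
      have h5 : 2 * Real.sqrt B * (Real.sqrt B / Real.sqrt (gg ν j))
          = 2 * B / Real.sqrt (gg ν j) := by
        have hBB : Real.sqrt B * Real.sqrt B = B := Real.mul_self_sqrt hB0
        field_simp
        nlinarith [hBB]
      have h6 : 4 * B / Real.sqrt (gg ν j) = 2 * (2 * B / Real.sqrt (gg ν j)) := by ring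
      linarith [hIco, h4, h5.le]
    calc a j * ∑ i ∈ Finset.Ico j N, 2 * μ i * Real.sqrt (gg ν i)
        ≤ a j * (4 * B / Real.sqrt (gg ν j)) :=
          mul_le_mul_of_nonneg_left h3 (ha_nonneg j)
      _ = 4 * B * (ν j * f j ^ 2) := by
          rw [ha]; field_simp
  refine (Finset.sum_le_sum step3).trans ?_
  rw [← Finset.mul_sum]

/-- Discrete Hardy inequality (sufficiency direction): if
`B := sup_{k≥1} (∑_{j≥k} μ_j)(∑_{i=1}^k 1/ν_i)` is finite (here: bounded by `B`),
then `∑ μ_i (∑_{j≤i} f_j)^2 ≤ 4B ∑ ν_i f_i^2` for every real sequence `f`.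
Sequences are indexed by `ℕ`, where index `n` corresponds to the paper's `i = n+1`.
Sums are taken in `ℝ≥0∞` so that either side may be infinite. -/
theorem stmt_0 (μ ν : ℕ → ℝ) (hμ : ∀ i, 0 < μ i) (hν : ∀ i, 0 < ν i)
    (B : ℝ)
    (hB : ∀ k : ℕ,
      (∑' j : ℕ, ENNReal.ofReal (μ (k + j))) *
        ENNReal.ofReal (∑ i ∈ Finset.range (k + 1), 1 / ν i) ≤ ENNReal.ofReal B) :
    ∀ f : ℕ → ℝ,
      ∑' i : ℕ, ENNReal.ofReal (μ i * (∑ j ∈ Finset.range (i + 1), f j) ^ 2) ≤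
        ENNReal.ofReal (4 * B) * ∑' i : ℕ, ENNReal.ofReal (ν i * f i ^ 2) := by
  intro f
  -- μ is summable
  have hg0 : (0:ENNReal) < ENNReal.ofReal (∑ i ∈ Finset.range (0 + 1), 1 / ν i) := by
    apply ENNReal.ofReal_pos.2
    exact gg_pos ν hν 0
  have hT : (∑' j : ℕ, ENNReal.ofReal (μ (0 + j))) ≠ ⊤ := by
    intro h
    have := hB 0
    rw [h, ENNReal.top_mul hg0.ne'] at this
    exact (lt_irrefl _ (this.trans_lt ENNReal.ofReal_lt_top)).elim
  have hμs : Summable μ := by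
    have h1 : Summable (fun j => (μ (0 + j)).toNNReal) := by
      apply ENNReal.tsum_coe_ne_top_iff_summable.1
      convert hT using 3
      rfl
    have h2 : Summable (fun j => ((μ (0 + j)).toNNReal : ℝ)) := NNReal.summable_coe.2 h1
    refine h2.congr fun j => ?_
    rw [Real.coe_toNNReal _ (hμ _).le, Nat.zero_add]
  -- transfer hB to the reals
  have h1 : ∀ k, ENNReal.ofReal (MM μ k * gg ν k) ≤ ENNReal.ofReal B := by
    intro k
    have hM : ENNReal.ofReal (MM μ k) = ∑' j : ℕ, ENNReal.ofReal (μ (k + j)) :=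
      ENNReal.ofReal_tsum_of_nonneg (fun j => (hμ _).le) (MM_summable μ k hμs)
    rw [ENNReal.ofReal_mul (MM_pos μ hμ hμs k).le, hM]
    exact hB k
  have hBpos : 0 < B := by
    have h2 : (0:ENNReal) < ENNReal.ofReal (MM μ 0 * gg ν 0) :=
      ENNReal.ofReal_pos.2 (mul_pos (MM_pos μ hμ hμs 0) (gg_pos ν hν 0))
    exact ENNReal.ofReal_pos.1 (h2.trans_le (h1 0))
  have hMg : ∀ k, MM μ k * gg ν k ≤ B := fun k =>
    (ENNReal.ofReal_le_ofReal_iff hBpos.le).1 (h1 k)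
  have hB0 : 0 ≤ B := le_trans (mul_pos (MM_pos μ hμ hμs 0) (gg_pos ν hν 0)).le (hMg 0)
  -- pass to partial sums
  apply Summable.tsum_le_of_sum_range_le ENNReal.summable
  intro n
  calc ∑ i ∈ Finset.range n, ENNReal.ofReal (μ i * (∑ j ∈ Finset.range (i + 1), f j) ^ 2)
      = ENNReal.ofReal (∑ i ∈ Finset.range n,
          μ i * (∑ j ∈ Finset.range (i + 1), f j) ^ 2) := by
        rw [ENNReal.ofReal_sum_of_nonneg]
        intro i _
        have := (hμ i).le
        positivity
    _ ≤ ENNReal.ofReal (4 * B * ∑ i ∈ Finset.range n, ν i * f i ^ 2) :=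
        ENNReal.ofReal_le_ofReal (keyfin μ ν hμ hν hμs B hMg f n)
    _ = ENNReal.ofReal (4 * B) * ENNReal.ofReal (∑ i ∈ Finset.range n, ν i * f i ^ 2) :=
        ENNReal.ofReal_mul (by linarith)
    _ ≤ ENNReal.ofReal (4 * B) * ∑' i : ℕ, ENNReal.ofReal (ν i * f i ^ 2) := by
        apply mul_le_mul_right
        rw [ENNReal.ofReal_sum_of_nonneg (fun i _ => by have := (hν i).le; positivity)]
        exact ENNReal.sum_le_tsum _
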